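/- arXiv:2306.01956 — 5 statements merged into one kernel-verified Lean document; each statement's English description precedes it below -/
import Mathlib

section
/- Let R be a subring of ℚ and suppose 𝔠 assigns to each subset σ ⊆ {1,…,m} a positive natural number 𝔠_σ with 𝔠_∅ = 1, 𝔠_{{i}} = 1 for all i, and 𝔠_{σ'}·𝔠_{σ''} ∣ 𝔠_{σ'∪σ''} whenever σ' ∩ σ'' = ∅. Then there exist a coefficient sequence 𝔠' over R and a function u assigning to each subset σ a positive natural number u_σ whose image in R is a unit, such that 𝔠_σ = u_σ · 𝔠'_σ for every σ ⊆ {1,…,m}. -/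
open Finset

def cprimeAux (P : ℕ → Prop) [DecidablePred P] (n : ℕ) : ℕ :=
  ∏ p ∈ n.primeFactors.filter (fun p => ¬ P p), p ^ n.factorization p

lemma cprimeAux_pos (P : ℕ → Prop) [DecidablePred P] (n : ℕ) : 0 < cprimeAux P n := by
  apply Finset.prod_pos
  intro p hp
  simp only [mem_filter, Nat.mem_primeFactors] at hp
  exact pow_pos hp.1.1.pos _

lemma cprimeAux_factorization (P : ℕ → Prop) [DecidablePred P] {n : ℕ} (hn : n ≠ 0) (q : ℕ) :
    (cprimeAux P n).factorization q = if P q then 0 else n.factorization q := by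
  rw [cprimeAux, Nat.factorization_prod (fun p hp => ?_)]
  · rw [Finsupp.finset_sum_apply]
    have key : ∀ p ∈ n.primeFactors.filter (fun p => ¬ P p),
        ((p ^ n.factorization p).factorization) q
          = if p = q then n.factorization p else 0 := by
      intro p hp
      simp only [mem_filter, Nat.mem_primeFactors] at hp
      rw [Nat.Prime.factorization_pow hp.1.1, Finsupp.single_apply]
    rw [Finset.sum_congr rfl key, Finset.sum_ite_eq']
    by_cases hq : q ∈ n.primeFactors.filter (fun p => ¬ P p)
    · rw [if_pos hq]
      simp only [mem_filter] at hq
      rw [if_neg hq.2]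
    · rw [if_neg hq]
      simp only [mem_filter, Nat.mem_primeFactors, not_and_or, not_not] at hq
      by_cases hP : P q
      · rw [if_pos hP]
      · rw [if_neg hP]
        rcases hq with h | h
        · rw [eq_comm, Nat.factorization_eq_zero_iff]
          exact h
        · exact absurd h hP
  · simp only [mem_filter, Nat.mem_primeFactors] at hp
    exact pow_ne_zero _ hp.1.1.pos.ne'

lemma unit_prod (R : Subring ℚ) {α : Type*} (s : Finset α) (f : α → ℕ)
    (h : ∀ a ∈ s, ∃ v ∈ R, (f a : ℚ) * v = 1) :
    ∃ v ∈ R, ((∏ a ∈ s, f a : ℕ) : ℚ) * v = 1 := by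
  classical
  induction s using Finset.induction_on with
  | empty => exact ⟨1, R.one_mem, by norm_num⟩
  | @insert a s hx ih =>
    obtain ⟨va, hva, ha⟩ := h a (Finset.mem_insert_self a s)
    obtain ⟨vs, hvs, hs⟩ := ih (fun b hb => h b (Finset.mem_insert_of_mem hb))
    refine ⟨va * vs, R.mul_mem hva hvs, ?_⟩
    rw [Finset.prod_insert hx]
    push_cast
    push_cast at hs
    calc (f a : ℚ) * (∏ b ∈ s, (f b : ℚ)) * (va * vs)
        = ((f a : ℚ) * va) * ((∏ b ∈ s, (f b : ℚ)) * vs) := by ring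
      _ = 1 := by rw [ha, hs, one_mul]

/-- if `𝔠` satisfies conditions 1) and 2) of a coefficient sequence,
then there is a coefficient sequence `𝔠'` over the subring `R ⊆ ℚ` and a function
`u` taking positive natural values whose images in `R` are units, with
`𝔠_σ = u_σ * 𝔠'_σ` for all `σ`. -/
theorem stmt_1 (m : ℕ) (R : Subring ℚ) (𝔠 : Finset (Fin m) → ℕ)
    (hpos : ∀ σ, 0 < 𝔠 σ)
    (hempty : 𝔠 ∅ = 1)
    (hsingle : ∀ i : Fin m, 𝔠 {i} = 1)
    (hdvd : ∀ σ' σ'' : Finset (Fin m), Disjoint σ' σ'' →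
      𝔠 σ' * 𝔠 σ'' ∣ 𝔠 (σ' ∪ σ'')) :
    ∃ 𝔠' u : Finset (Fin m) → ℕ,
      (∀ σ, 0 < 𝔠' σ) ∧
      𝔠' ∅ = 1 ∧
      (∀ i : Fin m, 𝔠' {i} = 1) ∧
      (∀ σ' σ'' : Finset (Fin m), Disjoint σ' σ'' →
        𝔠' σ' * 𝔠' σ'' ∣ 𝔠' (σ' ∪ σ'')) ∧
      (∀ σ, ∀ p : ℕ, p.Prime → (∃ v ∈ R, (p : ℚ) * v = 1) →
        Nat.Coprime (𝔠' σ) p) ∧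
      (∀ σ, 0 < u σ ∧ ∃ v ∈ R, (u σ : ℚ) * v = 1) ∧
      (∀ σ, 𝔠 σ = u σ * 𝔠' σ) := by
  classical
  set P : ℕ → Prop := fun p => ∃ v ∈ R, (p : ℚ) * v = 1 with hP
  refine ⟨fun σ => cprimeAux P (𝔠 σ),
    fun σ => ∏ p ∈ (𝔠 σ).primeFactors.filter (fun p => P p), p ^ (𝔠 σ).factorization p,
    fun σ => cprimeAux_pos P _, ?_, ?_, ?_, ?_, ?_, ?_⟩
  · show cprimeAux P (𝔠 ∅) = 1
    rw [cprimeAux, hempty]; simp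
  · intro i
    show cprimeAux P (𝔠 {i}) = 1
    rw [cprimeAux, hsingle i]; simp
  · intro σ' σ'' hdisj
    have h1 := hpos σ'
    have h2 := hpos σ''
    have h3 := hpos (σ' ∪ σ'')
    rw [← Nat.factorization_le_iff_dvd
      (Nat.mul_ne_zero (cprimeAux_pos P _).ne' (cprimeAux_pos P _).ne')
      (cprimeAux_pos P _).ne']
    intro q
    rw [Nat.factorization_mul (cprimeAux_pos P _).ne' (cprimeAux_pos P _).ne']
    simp only [Finsupp.coe_add, Pi.add_apply]
    rw [cprimeAux_factorization P h1.ne' q, cprimeAux_factorization P h2.ne' q,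
      cprimeAux_factorization P h3.ne' q]
    by_cases hq : P q
    · simp [hq]
    · simp only [if_neg hq]
      have := (Nat.factorization_le_iff_dvd
        (Nat.mul_ne_zero h1.ne' h2.ne') h3.ne').2 (hdvd σ' σ'' hdisj) q
      rwa [Nat.factorization_mul h1.ne' h2.ne'] at this
  · intro σ p hp hpu
    have h := cprimeAux_factorization P (hpos σ).ne' p
    rw [if_pos hpu] at h
    rw [Nat.factorization_eq_zero_iff] at h
    rcases h with h | h | h
    · exact absurd hp h
    · exact Nat.Coprime.symm ((hp.coprime_iff_not_dvd).2 h)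
    · exact absurd h (cprimeAux_pos P (𝔠 σ)).ne'
  · intro σ
    refine ⟨Finset.prod_pos (fun p hp => ?_), ?_⟩
    · simp only [mem_filter, Nat.mem_primeFactors] at hp
      exact pow_pos hp.1.1.pos _
    · apply unit_prod
      intro p hp
      simp only [mem_filter] at hp
      obtain ⟨v, hv, hpv⟩ := hp.2
      refine ⟨v ^ (𝔠 σ).factorization p, R.pow_mem hv _, ?_⟩
      push_cast
      rw [← mul_pow, hpv, one_pow]
  · intro σ
    show 𝔠 σ = (∏ p ∈ (𝔠 σ).primeFactors.filter (fun p => P p), p ^ (𝔠 σ).factorization p)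
      * cprimeAux P (𝔠 σ)
    rw [cprimeAux, Finset.prod_filter_mul_prod_filter_not]
    have := Nat.factorization_prod_pow_eq_self (hpos σ).ne'
    rwa [Finsupp.prod, Nat.support_factorization, eq_comm] at this
end

section
/- For m = 3 the map Φ restricted to normalized power sequences is not injective: there exist power sequences c and c̄ on the subsets of {1,2,3}, both satisfying the normalization c_i^{{i}} = c̄_i^{{i}} = 1 for all i, such that c ≠ c̄ but Φ(c)_σ = Φ(c̄)_σ for every σ ⊆ {1,2,3}. -/
/-- for `m = 3` the map `Φ` restricted to normalized power sequences
is not injective. -/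
theorem stmt_2 :
    ∃ c cbar : Finset (Fin 3) → Fin 3 → ℕ,
      (∀ σ i, 0 < c σ i) ∧
      (∀ σ i, i ∉ σ → c σ i = 1) ∧
      (∀ τ σ : Finset (Fin 3), τ ⊆ σ → ∀ i, c τ i ∣ c σ i) ∧
      (∀ i : Fin 3, c {i} i = 1) ∧
      (∀ σ i, 0 < cbar σ i) ∧
      (∀ σ i, i ∉ σ → cbar σ i = 1) ∧
      (∀ τ σ : Finset (Fin 3), τ ⊆ σ → ∀ i, cbar τ i ∣ cbar σ i) ∧
      (∀ i : Fin 3, cbar {i} i = 1) ∧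
      c ≠ cbar ∧
      (∀ σ : Finset (Fin 3), (∏ i ∈ σ, c σ i) = ∏ i ∈ σ, cbar σ i) := by
  refine ⟨fun σ i => if σ = Finset.univ ∧ i = 0 then 2 else 1,
          fun σ i => if σ = Finset.univ ∧ i = 1 then 2 else 1,
          ?_, ?_, ?_, ?_, ?_, ?_, ?_, ?_, ?_, ?_⟩ <;>
    first
      | decide
      | (intro h; exact absurd (congrFun (congrFun h Finset.univ) 0) (by decide))
end

section
/- Let m = 3 and define 𝔠 on subsets of {1,2,3} by 𝔠_σ = 2 if |σ| = 2 or |σ| = 3, and 𝔠_σ = 1 if |σ| ≤ 1. Then 𝔠 is not in the image of Φ: there is no power sequence c with c_i^{{i}} = 1 for all i satisfying Φ(c)_σ = 𝔠_σ for every σ ⊆ {1,2,3}. -/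
/-- the coefficient sequence taking value `2` on subsets of
cardinality `2` or `3` (and `1` otherwise) is not in the image of `Φ`. -/
theorem stmt_3 :
    ¬ ∃ c : Finset (Fin 3) → Fin 3 → ℕ,
      (∀ σ i, 0 < c σ i) ∧
      (∀ σ i, i ∉ σ → c σ i = 1) ∧
      (∀ τ σ : Finset (Fin 3), τ ⊆ σ → ∀ i, c τ i ∣ c σ i) ∧
      (∀ i : Fin 3, c {i} i = 1) ∧
      (∀ σ : Finset (Fin 3),
        (∏ i ∈ σ, c σ i) = if 2 ≤ σ.card then 2 else 1) := by
  rintro ⟨c, hpos, h1, hdvd, hsingle, hprod⟩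
  have hu := hprod Finset.univ
  rw [Fin.prod_univ_three] at hu
  simp only [Finset.card_univ, Fintype.card_fin] at hu
  norm_num at hu
  -- pair products
  have p01 : c {0, 1} 0 * c {0, 1} 1 = 2 := by
    have := hprod {0, 1}
    rwa [Finset.prod_pair (by decide), if_pos (by decide)] at this
  have p02 : c {0, 2} 0 * c {0, 2} 2 = 2 := by
    have := hprod {0, 2}
    rwa [Finset.prod_pair (by decide), if_pos (by decide)] at this
  have p12 : c {1, 2} 1 * c {1, 2} 2 = 2 := by
    have := hprod {1, 2}
    rwa [Finset.prod_pair (by decide), if_pos (by decide)] at this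
  -- divisibility into univ
  have d01s : ({0,1} : Finset (Fin 3)) ⊆ Finset.univ := Finset.subset_univ _
  have d02s : ({0,2} : Finset (Fin 3)) ⊆ Finset.univ := Finset.subset_univ _
  have d12s : ({1,2} : Finset (Fin 3)) ⊆ Finset.univ := Finset.subset_univ _
  have d0 := hdvd _ _ d12s 1
  have d0' := hdvd _ _ d12s 2
  have d1 := hdvd _ _ d02s 0
  have d1' := hdvd _ _ d02s 2
  have d2 := hdvd _ _ d01s 0
  have d2' := hdvd _ _ d01s 1
  -- each univ value divides 2
  set a := c Finset.univ 0
  set b := c Finset.univ 1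
  set e := c Finset.univ 2
  have ha : a = 1 ∨ a = 2 :=
    (Nat.dvd_prime Nat.prime_two).mp (by rw [← hu]; exact ⟨b * e, by ring⟩)
  have hb : b = 1 ∨ b = 2 :=
    (Nat.dvd_prime Nat.prime_two).mp (by rw [← hu]; exact ⟨a * e, by ring⟩)
  have he : e = 1 ∨ e = 2 :=
    (Nat.dvd_prime Nat.prime_two).mp (by rw [← hu]; exact ⟨a * b, by ring⟩)
  -- exactly one is 2; the pair missing it gives a contradiction
  rcases ha with ha | ha
  · rcases hb with hb | hb
    · -- a = b = 1, so pair {0,1} values divide 1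
      have e2 : c {0,1} 0 = 1 := Nat.dvd_one.mp (ha ▸ d2)
      have e3 : c {0,1} 1 = 1 := Nat.dvd_one.mp (hb ▸ d2')
      rw [e2, e3] at p01; omega
    · -- b = 2 forces a = e = 1
      have he1 : e = 1 := by rw [ha, hb] at hu; omega
      have e2 : c {0,2} 0 = 1 := Nat.dvd_one.mp (ha ▸ d1)
      have e3 : c {0,2} 2 = 1 := Nat.dvd_one.mp (he1 ▸ d1')
      rw [e2, e3] at p02; omega
  · -- a = 2 forces b = e = 1
    have hb1 : b = 1 := by rw [ha] at hu; nlinarith [hpos Finset.univ 1, hpos Finset.univ 2]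
    have he1 : e = 1 := by rw [ha, hb1] at hu; omega
    have e2 : c {1,2} 1 = 1 := Nat.dvd_one.mp (hb1 ▸ d0)
    have e3 : c {1,2} 2 = 1 := Nat.dvd_one.mp (he1 ▸ d0')
    rw [e2, e3] at p12; omega
end

section
/- Let m = 3 and let c be a power sequence on the subsets of {1,2,3} with c_i^{{i}} = 1 for all i. If Φ(c)_σ = 2 for every two-element subset σ ⊆ {1,2,3}, then 4 divides Φ(c)_{{1,2,3}}. -/
/-- if `c` is a normalized power sequence for `m = 3` and
`Φ(c)_σ = 2` for every two-element subset `σ`, then `4 ∣ Φ(c)_{{1,2,3}}`. -/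
theorem stmt_4 (c : Finset (Fin 3) → Fin 3 → ℕ)
    (hpos : ∀ σ i, 0 < c σ i)
    (hout : ∀ σ i, i ∉ σ → c σ i = 1)
    (hdvd : ∀ τ σ : Finset (Fin 3), τ ⊆ σ → ∀ i, c τ i ∣ c σ i)
    (hnorm : ∀ i : Fin 3, c {i} i = 1)
    (h2 : ∀ σ : Finset (Fin 3), σ.card = 2 → (∏ i ∈ σ, c σ i) = 2) :
    4 ∣ ∏ i ∈ (Finset.univ : Finset (Fin 3)), c Finset.univ i := by
  have key : ∀ i j : Fin 3, i ≠ j → 2 ∣ c Finset.univ i ∨ 2 ∣ c Finset.univ j := by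
    intro i j hij
    have hnot : i ∉ ({j} : Finset (Fin 3)) := by simp [hij]
    have hcard : ({i, j} : Finset (Fin 3)).card = 2 := by
      rw [Finset.card_insert_of_notMem hnot, Finset.card_singleton]
    have hp := h2 {i, j} hcard
    rw [Finset.prod_insert hnot, Finset.prod_singleton] at hp
    have hx : c {i, j} i ∣ 2 := ⟨_, hp.symm⟩
    have hsub : ({i, j} : Finset (Fin 3)) ⊆ Finset.univ := Finset.subset_univ _
    rcases (Nat.prime_two.eq_one_or_self_of_dvd _ hx) with h1 | h1
    · right
      have : c {i, j} j = 2 := by rw [h1, one_mul] at hp; exact hp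
      exact this ▸ hdvd _ _ hsub j
    · left
      exact h1 ▸ hdvd _ _ hsub i
  have main : ∀ a b d : ℕ,
      (2 ∣ a ∧ 2 ∣ b) ∨ (2 ∣ a ∧ 2 ∣ d) ∨ (2 ∣ b ∧ 2 ∣ d) → 4 ∣ a * b * d := by
    rintro a b d (⟨⟨x, rfl⟩, ⟨y, rfl⟩⟩ | ⟨⟨x, rfl⟩, ⟨y, rfl⟩⟩ | ⟨⟨x, rfl⟩, ⟨y, rfl⟩⟩)
    · exact ⟨x * y * d, by ring⟩
    · exact ⟨x * b * y, by ring⟩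
    · exact ⟨a * x * y, by ring⟩
  rw [Fin.prod_univ_three]
  apply main
  have h01 := key 0 1 (by decide)
  have h12 := key 1 2 (by decide)
  have h02 := key 0 2 (by decide)
  tauto
end

section
/- Fix a prime p. Every element of CS(p) lies in the group (inside ℚ^×) generated by the coefficient sequences 𝔠(τ) with |τ| ≥ 2: if 𝔠 assigns to each subset σ ⊆ {1,…,m} a power of p, with 𝔠_∅ = 1, 𝔠_{{i}} = 1 for all i, and 𝔠_{σ'}·𝔠_{σ''} ∣ 𝔠_{σ'∪σ''} for disjoint σ', σ'', then there exists z assigning an integer z_τ to each subset τ ⊆ {1,…,m} with |τ| ≥ 2 such that, for every σ, (𝔠_σ : ℚ) = ∏_{τ : |τ| ≥ 2} ((𝔠(τ)_σ : ℚ))^{z_τ}. -/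
open Finset

private lemma zpow_sum_aux {ι : Type*} {a : ℚ} (ha : a ≠ 0) (s : Finset ι) (f : ι → ℤ) :
    a ^ (∑ i ∈ s, f i) = ∏ i ∈ s, a ^ f i := by
  classical
  induction s using Finset.induction with
  | empty => simp
  | insert _ _ h ih => rw [Finset.sum_insert h, Finset.prod_insert h, zpow_add₀ ha, ih]

private lemma moebius_inv {m : ℕ} (k : Finset (Fin m) → ℤ) (σ : Finset (Fin m)) :
    ∑ τ ∈ σ.powerset, ∑ ρ ∈ τ.powerset, (-1 : ℤ) ^ (τ.card - ρ.card) * k ρ = k σ := by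
  rw [Finset.sum_comm' (s' := fun ρ => Finset.Icc ρ σ) (t' := σ.powerset)
    (fun τ ρ => by
      simp only [Finset.mem_powerset, Finset.mem_Icc]
      constructor
      · rintro ⟨h1, h2⟩; exact ⟨⟨h2, h1⟩, h2.trans h1⟩
      · rintro ⟨⟨h1, h2⟩, h3⟩; exact ⟨h2, h1⟩)]
  have key : ∀ ρ ∈ σ.powerset,
      ∑ τ ∈ Finset.Icc ρ σ, (-1 : ℤ) ^ (τ.card - ρ.card) * k ρ
        = if ρ = σ then k ρ else 0 := by
    intro ρ hρ
    rw [Finset.mem_powerset] at hρ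
    rw [Finset.Icc_eq_image_powerset hρ, Finset.sum_image]
    · have congr1 : ∀ u ∈ (σ \ ρ).powerset,
          (-1 : ℤ) ^ ((ρ ∪ u).card - ρ.card) * k ρ = (-1 : ℤ) ^ u.card * k ρ := by
        intro u hu
        rw [Finset.mem_powerset] at hu
        have hd : Disjoint ρ u := (disjoint_sdiff (s := ρ) (t := σ)).mono_right hu
        rw [Finset.card_union_of_disjoint hd, Nat.add_sub_cancel_left]
      rw [Finset.sum_congr rfl congr1, ← Finset.sum_mul,
        Finset.sum_powerset_neg_one_pow_card]
      have : σ \ ρ = ∅ ↔ ρ = σ := by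
        rw [Finset.sdiff_eq_empty_iff_subset]
        exact ⟨fun h => le_antisymm hρ h, fun h => h ▸ le_rfl⟩
      by_cases h : ρ = σ <;> simp [this, h]
    · intro u hu v hv huv
      rw [Finset.mem_coe, Finset.mem_powerset] at hu hv
      have : ρ ∪ u = ρ ∪ v := huv
      have hdu : Disjoint ρ u := (disjoint_sdiff (s := ρ) (t := σ)).mono_right hu
      have hdv : Disjoint ρ v := (disjoint_sdiff (s := ρ) (t := σ)).mono_right hv
      rw [← hdu.sup_sdiff_cancel_left, ← hdv.sup_sdiff_cancel_left]
      simp only [Finset.sup_eq_union]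
      rw [this]
  rw [Finset.sum_congr rfl key, Finset.sum_ite_eq' σ.powerset σ k]
  simp

/-- every element of `CS(p)` lies in the group inside `ℚˣ`
generated by the coefficient sequences `𝔠(τ)` with `|τ| ≥ 2`. -/
theorem stmt_15 (m : ℕ) (p : ℕ) (hp : p.Prime)
    (𝔠 : Finset (Fin m) → ℕ)
    (hpow : ∀ σ : Finset (Fin m), ∃ k : ℕ, 𝔠 σ = p ^ k)
    (hempty : 𝔠 ∅ = 1)
    (hsingle : ∀ i : Fin m, 𝔠 {i} = 1)
    (hdvd : ∀ σ' σ'' : Finset (Fin m), Disjoint σ' σ'' →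
      𝔠 σ' * 𝔠 σ'' ∣ 𝔠 (σ' ∪ σ'')) :
    ∃ z : Finset (Fin m) → ℤ,
      ∀ σ : Finset (Fin m),
        (𝔠 σ : ℚ) =
          ∏ τ ∈ Finset.univ.filter (fun τ : Finset (Fin m) => 2 ≤ τ.card),
            ((if τ ⊆ σ then (p : ℚ) else 1)) ^ z τ := by
  classical
  have hp1 : 1 < p := hp.one_lt
  have hpQ : (p : ℚ) ≠ 0 := by positivity
  -- exponent function
  set k : Finset (Fin m) → ℤ := fun σ => ((hpow σ).choose : ℤ) with hk
  have hck : ∀ σ, 𝔠 σ = p ^ (hpow σ).choose := fun σ => (hpow σ).choose_spec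
  have hkeq : ∀ σ, 𝔠 σ = 1 → k σ = 0 := by
    intro σ h1
    have he : p ^ (hpow σ).choose = p ^ 0 := by rw [← hck σ, h1, pow_zero]
    have h0 : (hpow σ).choose = 0 := Nat.pow_right_injective hp.two_le he
    simp [hk, h0]
  set z : Finset (Fin m) → ℤ :=
    fun τ => ∑ ρ ∈ τ.powerset, (-1 : ℤ) ^ (τ.card - ρ.card) * k ρ with hz
  have hz0 : ∀ τ : Finset (Fin m), τ.card ≤ 1 → z τ = 0 := by
    intro τ hτ
    interval_cases h : τ.card
    · rw [Finset.card_eq_zero] at h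
      subst h
      simp [hz, hkeq ∅ hempty]
    · rw [Finset.card_eq_one] at h
      obtain ⟨i, rfl⟩ := h
      have hpow2 : ({i} : Finset (Fin m)).powerset = {∅, {i}} := by
        ext u
        simp [Finset.mem_powerset, Finset.subset_singleton_iff]
      rw [hz]
      simp only [hpow2]
      rw [Finset.sum_pair (Finset.singleton_ne_empty i).symm]
      simp [hkeq ∅ hempty, hkeq {i} (hsingle i)]
  refine ⟨z, fun σ => ?_⟩
  -- rewrite RHS as a single power of p
  have step1 :
      ∏ τ ∈ Finset.univ.filter (fun τ : Finset (Fin m) => 2 ≤ τ.card),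
          ((if τ ⊆ σ then (p : ℚ) else 1)) ^ z τ
        = ∏ τ ∈ (Finset.univ.filter (fun τ : Finset (Fin m) => 2 ≤ τ.card)).filter
            (fun τ => τ ⊆ σ), (p : ℚ) ^ z τ := by
    rw [Finset.prod_filter (fun τ : Finset (Fin m) => τ ⊆ σ) (fun τ => (p : ℚ) ^ z τ)]
    refine Finset.prod_congr rfl fun τ _ => ?_
    by_cases h : τ ⊆ σ <;> simp [h]
  have hset : (Finset.univ.filter (fun τ : Finset (Fin m) => 2 ≤ τ.card)).filter
      (fun τ => τ ⊆ σ) = σ.powerset.filter (fun τ => 2 ≤ τ.card) := by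
    ext τ
    simp [Finset.mem_powerset, and_comm]
  have step2 : ∑ τ ∈ σ.powerset.filter (fun τ => 2 ≤ τ.card), z τ = k σ := by
    have := Finset.sum_filter_add_sum_filter_not σ.powerset
      (fun τ => 2 ≤ τ.card) z
    have hz2 : ∑ τ ∈ σ.powerset.filter (fun τ => ¬ 2 ≤ τ.card), z τ = 0 := by
      refine Finset.sum_eq_zero fun τ hτ => ?_
      rw [Finset.mem_filter] at hτ
      exact hz0 τ (by omega)
    have hm : ∑ τ ∈ σ.powerset, z τ = k σ := moebius_inv k σ
    omega
  rw [step1, hset, ← zpow_sum_aux hpQ, step2, hck σ, hk]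
  push_cast
  rw [zpow_natCast]
end
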